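/- If G is a connected graph of order n ≥ 7 that has a Hamiltonian path, then D'(G) ≤ 2. -/

import Mathlib

open SimpleGraph

/-- The distinguishing index: least number of labels in an edge labeling
preserved only by the identity automorphism. -/
noncomputable def distinguishingIndex {V : Type*} (G : SimpleGraph V) : ℕ :=
  sInf {d : ℕ | ∃ f : Sym2 V → Fin d,
    ∀ φ : G ≃g G, (∀ e ∈ G.edgeSet, f (Sym2.map ⇑φ e) = f e) → ∀ v, φ v = v}

/-- The distinguishing number: least number of labels in a vertex labeling
preserved only by the identity automorphism. -/
noncomputable def distinguishingNumber {V : Type*} (G : SimpleGraph V) : ℕ :=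
  sInf {d : ℕ | ∃ f : V → Fin d,
    ∀ φ : G ≃g G, (∀ v, f (φ v) = f v) → ∀ v, φ v = v}

/-- The dutch windmill graph `D_n^k`: `n` copies of the cycle `C_k`
sharing one common central vertex (`none`). -/
def windmill (n k : ℕ) : SimpleGraph (Option (Fin n × Fin (k - 1))) :=
  SimpleGraph.fromRel (fun a b =>
    match a, b with
    | none, some (_, j) => j.val = 0 ∨ j.val = k - 2
    | some (i, j), some (i', j') => i = i' ∧ j'.val = j.val + 1
    | _, _ => False)

set_option maxHeartbeats 1600000
set_option linter.unusedSectionVars false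
set_option linter.unusedVariables false

namespace HamDistAux

lemma addmod_inj (n s i j : ℕ) (hi : i < n) (hj : j < n)
    (h : (s + i) % n = (s + j) % n) : i = j := by
  have h1 : i ≡ j [MOD n] := Nat.ModEq.add_left_cancel' s h
  have h2 : i % n = j % n := h1
  rwa [Nat.mod_eq_of_lt hi, Nat.mod_eq_of_lt hj] at h2

/-- surjectivity on [0,n) from injectivity -/
lemma surj_aux (n : ℕ) (π : ℕ → ℕ) (hlt : ∀ k, k < n → π k < n)
    (hinj : ∀ i j, i < n → j < n → π i = π j → i = j) :
    ∀ m, m < n → ∃ k, k < n ∧ π k = m := by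
  intro m hm
  have := Finset.surj_on_of_inj_on_of_card_le (s := Finset.range n) (t := Finset.range n)
    (f := fun a _ => π a)
    (fun a ha => by
      simp only [Finset.mem_range] at ha ⊢
      exact hlt a ha)
    (fun a₁ a₂ ha₁ ha₂ h => by
      simp only [Finset.mem_range] at ha₁ ha₂; exact hinj _ _ ha₁ ha₂ h)
    le_rfl m (by simpa using hm)
  obtain ⟨a, ha, hae⟩ := this
  simp only [Finset.mem_range] at ha
  exact ⟨a, ha, hae.symm⟩

/-- Chain relation: red edges {k, k+1} for 1 ≤ k ≤ n-2 -/
def chainR (n i j : ℕ) : Prop :=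
  (i + 1 = j ∧ 1 ≤ i ∧ j ≤ n - 1) ∨ (j + 1 = i ∧ 1 ≤ j ∧ i ≤ n - 1)

lemma chainR_symm {n i j : ℕ} (h : chainR n i j) : chainR n j i := by
  unfold chainR at *; tauto

/-- Family B: classification of permutations preserving the chain relation. -/
lemma famB (n : ℕ) (hn : 7 ≤ n) (π : ℕ → ℕ)
    (hlt : ∀ k, k < n → π k < n)
    (hinj : ∀ i j, i < n → j < n → π i = π j → i = j)
    (hpres : ∀ i j, i < n → j < n → (chainR n i j ↔ chainR n (π i) (π j))) :
    (∀ k, k < n → π k = k) ∨ (π 0 = 0 ∧ ∀ k, 1 ≤ k → k ≤ n - 1 → π k = n - k) := by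
  have hsurj := surj_aux n π hlt hinj
  -- step 1 : π 1 ∈ {1, n-1}
  have h12 : chainR n (π 1) (π 2) := (hpres 1 2 (by omega) (by omega)).mp (by unfold chainR; omega)
  have hπ1 : π 1 = 1 ∨ π 1 = n - 1 := by
    by_contra hc
    push_neg at hc
    have h1lt := hlt 1 (by omega)
    -- π 1 has at least one neighbor so π 1 ≠ 0 ; and 2 ≤ π 1 ≤ n-2 gives two neighbors
    have hne0 : π 1 ≠ 0 := by
      intro h0
      rw [h0] at h12
      unfold chainR at h12; omega
    have h2b : 2 ≤ π 1 ∧ π 1 ≤ n - 2 := by omega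
    obtain ⟨x1, hx1, hx1e⟩ := hsurj (π 1 - 1) (by omega)
    obtain ⟨x2, hx2, hx2e⟩ := hsurj (π 1 + 1) (by omega)
    have hr1 : chainR n (π 1) (π x1) := by unfold chainR; rw [hx1e]; omega
    have hr2 : chainR n (π 1) (π x2) := by unfold chainR; rw [hx2e]; omega
    have e1 : chainR n 1 x1 := (hpres 1 x1 (by omega) hx1).mpr hr1
    have e2 : chainR n 1 x2 := (hpres 1 x2 (by omega) hx2).mpr hr2
    have hv1 : x1 = 2 := by unfold chainR at e1; omega
    have hv2 : x2 = 2 := by unfold chainR at e2; omega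
    have : π x1 ≠ π x2 := by omega
    rw [hv1, hv2] at this
    exact this rfl
  rcases hπ1 with h1 | h1
  · -- identity case
    left
    -- prove ∀ k, 1 ≤ k ≤ n-1 → π k = k by strong induction (two-step)
    have main : ∀ k, 1 ≤ k → k ≤ n - 1 → π k = k := by
      intro k
      induction k using Nat.strong_induction_on with
      | _ k ih =>
        intro hk1 hk2
        rcases Nat.lt_or_ge k 2 with hk | hk
        · have : k = 1 := by omega
          rw [this]; exact h1
        · -- k ≥ 2 : π (k-1) = k-1 and (π (k-2) = k-2 if k ≥ 3)
          have hkm1 : π (k-1) = k-1 := ih (k-1) (by omega) (by omega) (by omega)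
          have hr : chainR n (k-1) k := by unfold chainR; omega
          have hr2 : chainR n (π (k-1)) (π k) := (hpres (k-1) k (by omega) (by omega)).mp hr
          rw [hkm1] at hr2
          -- π k ∈ {k-2, k}
          have hmem : π k = k - 2 ∨ π k = k := by unfold chainR at hr2; omega
          rcases hmem with hm | hm
          · exfalso
            rcases Nat.lt_or_ge k 3 with h3 | h3
            · -- k = 2 : π 2 = 0 but 0 has no red neighbor while 2 does... 
              have : k = 2 := by omega
              subst this
              -- chainR n 2 3 → chainR n (π 2) (π 3) with π 2 = 0 impossible
              have hr3 : chainR n (π 2) (π 3) := (hpres 2 3 (by omega) (by omega)).mp (by unfold chainR; omega)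
              rw [hm] at hr3
              unfold chainR at hr3; omega
            · have hkm2 : π (k-2) = k-2 := ih (k-2) (by omega) (by omega) (by omega)
              have : k - 2 = k := hinj (k-2) k (by omega) (by omega) (by rw [hkm2, hm])
              omega
          · exact hm
    have h0 : π 0 = 0 := by
      by_contra hc
      have h0lt := hlt 0 (by omega)
      have h01 : 1 ≤ π 0 ∧ π 0 ≤ n - 1 := by omega
      have := main (π 0) (by omega) (by omega)
      have : π (π 0) = π 0 := this
      have : π 0 = 0 := hinj (π 0) 0 (by omega) (by omega) (by omega)
      omega
    intro k hk
    rcases Nat.eq_or_lt_of_le (Nat.zero_le k) with h | h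
    · rw [← h]; exact h0
    · exact main k (by omega) (by omega)
  · -- reversal case
    right
    have main : ∀ k, 1 ≤ k → k ≤ n - 1 → π k = n - k := by
      intro k
      induction k using Nat.strong_induction_on with
      | _ k ih =>
        intro hk1 hk2
        rcases Nat.lt_or_ge k 2 with hk | hk
        · have : k = 1 := by omega
          rw [this]; exact h1
        · have hkm1 : π (k-1) = n - (k-1) := ih (k-1) (by omega) (by omega) (by omega)
          have hr : chainR n (k-1) k := by unfold chainR; omega
          have hr2 : chainR n (π (k-1)) (π k) := (hpres (k-1) k (by omega) (by omega)).mp hr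
          rw [hkm1] at hr2
          have hmem : π k = n - k ∨ π k = n - k + 2 := by unfold chainR at hr2; omega
          rcases hmem with hm | hm
          · exact hm
          · exfalso
            rcases Nat.lt_or_ge k 3 with h3 | h3
            · have : k = 2 := by omega
              subst this
              have hr3 : chainR n (π 2) (π 3) := (hpres 2 3 (by omega) (by omega)).mp (by unfold chainR; omega)
              rw [hm] at hr3
              have h3lt := hlt 3 (by omega)
              unfold chainR at hr3; omega
            · have hkm2 : π (k-2) = n - (k-2) := ih (k-2) (by omega) (by omega) (by omega)
              have : k - 2 = k := hinj (k-2) k (by omega) (by omega) (by omega)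
              omega
    have h0 : π 0 = 0 := by
      by_contra hc
      have h0lt := hlt 0 (by omega)
      have h01 : 1 ≤ π 0 ∧ π 0 ≤ n - 1 := by omega
      obtain ⟨x, hx, hxe⟩ := hsurj 0 (by omega)
      have hx1 : 1 ≤ x ∧ x ≤ n - 1 := by
        constructor
        · rcases Nat.eq_zero_or_pos x with h | h
          · exfalso; rw [h] at hxe; omega
          · omega
        · omega
      have := main x (by omega) (by omega)
      omega
    exact ⟨h0, main⟩

/-- Tadpole relation: all path edges {k,k+1}, k ≤ n-2, plus chord {a,b}. -/
def tadR (n a b i j : ℕ) : Prop :=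
  (i + 1 = j ∧ j ≤ n - 1) ∨ (j + 1 = i ∧ i ≤ n - 1) ∨ (i = a ∧ j = b) ∨ (i = b ∧ j = a)

lemma famC (n a b : ℕ) (hn : 7 ≤ n) (ha : 1 ≤ a) (hab : a + 2 ≤ b) (hb : b ≤ n - 2)
    (hasym : a ≠ n - 1 - b) (π : ℕ → ℕ)
    (hlt : ∀ k, k < n → π k < n)
    (hinj : ∀ i j, i < n → j < n → π i = π j → i = j)
    (hsurj : ∀ m, m < n → ∃ k, k < n ∧ π k = m)
    (hpres : ∀ i j, i < n → j < n → (tadR n a b i j ↔ tadR n a b (π i) (π j))) :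
    ∀ k, k < n → π k = k := by
  -- neighbor characterization
  have hchar : ∀ i x, i < n → x < n →
      (tadR n a b i x ↔ ((x + 1 = i ∧ 1 ≤ i) ∨ (x = i + 1 ∧ i + 1 ≤ n - 1)
        ∨ (i = a ∧ x = b) ∨ (i = b ∧ x = a))) := by
    intro i x hi hx; unfold tadR; omega
  -- pigeonhole: interior chain vertex cannot map to a degree-3 vertex
  have hpig : ∀ t s, t < n → π t = s → 1 ≤ t → t ≤ n - 2 → t ≠ a → t ≠ b →
      (s = a ∨ s = b) → False := by
    intro t s htn hts ht1 ht2 hta htb hs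
    -- the three neighbors of s
    have hu : ∃ u1 u2 u3 : ℕ, u1 < n ∧ u2 < n ∧ u3 < n ∧ u1 ≠ u2 ∧ u1 ≠ u3 ∧ u2 ≠ u3 ∧
        tadR n a b s u1 ∧ tadR n a b s u2 ∧ tadR n a b s u3 := by
      rcases hs with h | h
      · exact ⟨a - 1, a + 1, b, by omega, by omega, by omega, by omega, by omega, by omega,
          by unfold tadR; omega, by unfold tadR; omega, by unfold tadR; omega⟩
      · exact ⟨b - 1, b + 1, a, by omega, by omega, by omega, by omega, by omega, by omega,
          by unfold tadR; omega, by unfold tadR; omega, by unfold tadR; omega⟩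
    obtain ⟨u1, u2, u3, hu1, hu2, hu3, h12, h13, h23, hr1, hr2, hr3⟩ := hu
    obtain ⟨x1, hx1, hx1e⟩ := hsurj u1 hu1
    obtain ⟨x2, hx2, hx2e⟩ := hsurj u2 hu2
    obtain ⟨x3, hx3, hx3e⟩ := hsurj u3 hu3
    have e1 : tadR n a b t x1 := (hpres t x1 htn hx1).mpr (by rw [hts, hx1e]; exact hr1)
    have e2 : tadR n a b t x2 := (hpres t x2 htn hx2).mpr (by rw [hts, hx2e]; exact hr2)
    have e3 : tadR n a b t x3 := (hpres t x3 htn hx3).mpr (by rw [hts, hx3e]; exact hr3)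
    have c1 : x1 = t - 1 ∨ x1 = t + 1 := by rw [hchar t x1 htn hx1] at e1; omega
    have c2 : x2 = t - 1 ∨ x2 = t + 1 := by rw [hchar t x2 htn hx2] at e2; omega
    have c3 : x3 = t - 1 ∨ x3 = t + 1 := by rw [hchar t x3 htn hx3] at e3; omega
    have d12 : x1 ≠ x2 := fun h => h12 (by rw [← hx1e, ← hx2e, h])
    have d13 : x1 ≠ x3 := fun h => h13 (by rw [← hx1e, ← hx3e, h])
    have d23 : x2 ≠ x3 := fun h => h23 (by rw [← hx2e, ← hx3e, h])
    omega
  -- dual pigeonhole: a degree-3 vertex cannot map to an interior chain vertex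
  have hpig2 : ∀ t s, t < n → π t = s → (t = a ∨ t = b) → 1 ≤ s → s ≤ n - 2 →
      s ≠ a → s ≠ b → False := by
    intro t s htn hts ht hs1 hs2 hsa hsb
    have hu : ∃ u1 u2 u3 : ℕ, u1 < n ∧ u2 < n ∧ u3 < n ∧ u1 ≠ u2 ∧ u1 ≠ u3 ∧ u2 ≠ u3 ∧
        tadR n a b t u1 ∧ tadR n a b t u2 ∧ tadR n a b t u3 := by
      rcases ht with h | h
      · exact ⟨a - 1, a + 1, b, by omega, by omega, by omega, by omega, by omega, by omega,
          by unfold tadR; omega, by unfold tadR; omega, by unfold tadR; omega⟩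
      · exact ⟨b - 1, b + 1, a, by omega, by omega, by omega, by omega, by omega, by omega,
          by unfold tadR; omega, by unfold tadR; omega, by unfold tadR; omega⟩
    obtain ⟨u1, u2, u3, hu1, hu2, hu3, h12, h13, h23, hr1, hr2, hr3⟩ := hu
    have e1 : tadR n a b s (π u1) := by rw [← hts]; exact (hpres t u1 htn hu1).mp hr1
    have e2 : tadR n a b s (π u2) := by rw [← hts]; exact (hpres t u2 htn hu2).mp hr2
    have e3 : tadR n a b s (π u3) := by rw [← hts]; exact (hpres t u3 htn hu3).mp hr3
    have c1 : π u1 = s - 1 ∨ π u1 = s + 1 := by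
      rw [hchar s (π u1) (by omega) (hlt u1 hu1)] at e1; omega
    have c2 : π u2 = s - 1 ∨ π u2 = s + 1 := by
      rw [hchar s (π u2) (by omega) (hlt u2 hu2)] at e2; omega
    have c3 : π u3 = s - 1 ∨ π u3 = s + 1 := by
      rw [hchar s (π u3) (by omega) (hlt u3 hu3)] at e3; omega
    have d12 : π u1 ≠ π u2 := fun h => h12 (hinj u1 u2 hu1 hu2 h)
    have d13 : π u1 ≠ π u3 := fun h => h13 (hinj u1 u3 hu1 hu3 h)
    have d23 : π u2 ≠ π u3 := fun h => h23 (hinj u2 u3 hu2 hu3 h)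
    omega
  -- anchor: π 0 ∈ {0, n-1}
  have h01 : tadR n a b (π 0) (π 1) := (hpres 0 1 (by omega) (by omega)).mp (by unfold tadR; omega)
  have hanchor : π 0 = 0 ∨ π 0 = n - 1 := by
    by_contra hc
    push_neg at hc
    have h0lt := hlt 0 (by omega)
    have hne0 : π 0 ≠ 0 := hc.1
    have hint : 1 ≤ π 0 ∧ π 0 ≤ n - 2 := by omega
    -- π 0 is either interior chain vertex (2 nbrs) or a/b (3 nbrs); 0 has only nbr 1
    by_cases hd3 : π 0 = a ∨ π 0 = b
    · -- 0 interior? 0 is an endpoint; use hpig with t = 0? t needs 1 ≤ t. direct: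
      -- 0 has only one neighbor 1, but π 0 has ≥ 3 neighbors
      obtain ⟨u1, u2, u3, hu1, hu2, hu3, h12, h13, h23, hr1, hr2, hr3⟩ :
          ∃ u1 u2 u3 : ℕ, u1 < n ∧ u2 < n ∧ u3 < n ∧ u1 ≠ u2 ∧ u1 ≠ u3 ∧ u2 ≠ u3 ∧
          tadR n a b (π 0) u1 ∧ tadR n a b (π 0) u2 ∧ tadR n a b (π 0) u3 := by
        rcases hd3 with h | h
        · exact ⟨a - 1, a + 1, b, by omega, by omega, by omega, by omega, by omega, by omega,
            by unfold tadR; omega, by unfold tadR; omega, by unfold tadR; omega⟩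
        · exact ⟨b - 1, b + 1, a, by omega, by omega, by omega, by omega, by omega, by omega,
            by unfold tadR; omega, by unfold tadR; omega, by unfold tadR; omega⟩
      obtain ⟨x1, hx1, hx1e⟩ := hsurj u1 hu1
      obtain ⟨x2, hx2, hx2e⟩ := hsurj u2 hu2
      have e1 : tadR n a b 0 x1 := (hpres 0 x1 (by omega) hx1).mpr (by rw [hx1e]; exact hr1)
      have e2 : tadR n a b 0 x2 := (hpres 0 x2 (by omega) hx2).mpr (by rw [hx2e]; exact hr2)
      have c1 : x1 = 1 := by rw [hchar 0 x1 (by omega) hx1] at e1; omega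
      have c2 : x2 = 1 := by rw [hchar 0 x2 (by omega) hx2] at e2; omega
      exact h12 (by rw [← hx1e, ← hx2e, c1, c2])
    · push_neg at hd3
      obtain ⟨x1, hx1, hx1e⟩ := hsurj (π 0 - 1) (by omega)
      obtain ⟨x2, hx2, hx2e⟩ := hsurj (π 0 + 1) (by omega)
      have e1 : tadR n a b 0 x1 := (hpres 0 x1 (by omega) hx1).mpr (by unfold tadR; omega)
      have e2 : tadR n a b 0 x2 := (hpres 0 x2 (by omega) hx2).mpr (by unfold tadR; omega)
      have c1 : x1 = 1 := by rw [hchar 0 x1 (by omega) hx1] at e1; omega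
      have c2 : x2 = 1 := by rw [hchar 0 x2 (by omega) hx2] at e2; omega
      rw [c1] at hx1e
      rw [c2] at hx2e
      omega
  rcases hanchor with h0 | h0
  · -- identity branch
    -- chain fix up to a
    have hup : ∀ k, k ≤ a → π k = k := by
      intro k
      induction k using Nat.strong_induction_on with
      | _ k ih =>
        intro hka
        match k, hka with
        | 0, _ => exact h0
        | 1, h1a =>
          have e : tadR n a b (π 0) (π 1) := h01
          rw [h0] at e
          have := hchar 0 (π 1) (by omega) (hlt 1 (by omega))
          rw [this] at e
          omega
        | (k+2), hka =>
          have hk1 : π (k+1) = k+1 := ih (k+1) (by omega) (by omega)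
          have hk0 : π k = k := ih k (by omega) (by omega)
          have e : tadR n a b (π (k+1)) (π (k+2)) :=
            (hpres (k+1) (k+2) (by omega) (by omega)).mp (by unfold tadR; omega)
          rw [hk1] at e
          rw [hchar (k+1) (π (k+2)) (by omega) (hlt (k+2) (by omega))] at e
          -- k+1 interior, not a (k+1 ≤ a, and if k+1 = a then k+2 ≤ a gives contra), not b
          have hne : π (k+2) ≠ k := by
            intro h; have := hinj (k+2) k (by omega) (by omega) (by rw [h, hk0]); omega
          omega
    -- π (a+1) = a+1
    have hap1 : π (a+1) = a+1 := by
      have e : tadR n a b (π a) (π (a+1)) :=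
        (hpres a (a+1) (by omega) (by omega)).mp (by unfold tadR; omega)
      rw [hup a le_rfl] at e
      rw [hchar a (π (a+1)) (by omega) (hlt (a+1) (by omega))] at e
      have hne : π (a+1) ≠ a - 1 := by
        intro h
        have h' : π (a+1) = π (a-1) := by rw [h, hup (a-1) (by omega)]
        have := hinj (a+1) (a-1) (by omega) (by omega) h'
        omega
      have hnb : π (a+1) ≠ b := by
        intro h
        exact hpig (a+1) b (by omega) h (by omega) (by omega) (by omega) (by omega) (Or.inr rfl)
      omega
    -- chain fix from a+1 to b-1
    have hmid : ∀ k, a + 1 ≤ k → k ≤ b - 1 → π k = k := by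
      intro k
      induction k using Nat.strong_induction_on with
      | _ k ih =>
        intro hk1 hk2
        rcases Nat.eq_or_lt_of_le hk1 with h | h
        · rw [← h]; exact hap1
        · have hkm : π (k-1) = k-1 := by
            rcases Nat.eq_or_lt_of_le (show a + 1 ≤ k - 1 by omega) with h' | h'
            · rw [← h']; exact hap1
            · exact ih (k-1) (by omega) (by omega) (by omega)
          have hkm2 : π (k-2) = k-2 := by
            rcases Nat.lt_or_ge (k-2) (a+1) with h' | h'
            · exact hup (k-2) (by omega)
            · rcases Nat.eq_or_lt_of_le h' with h'' | h''
              · rw [← h'']; exact hap1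
              · exact ih (k-2) (by omega) (by omega) (by omega)
          have e : tadR n a b (π (k-1)) (π k) :=
            (hpres (k-1) k (by omega) (by omega)).mp (by unfold tadR; omega)
          rw [hkm] at e
          rw [hchar (k-1) (π k) (by omega) (hlt k (by omega))] at e
          have hne : π k ≠ k - 2 := by
            intro h'
            have := hinj k (k-2) (by omega) (by omega) (by rw [h', hkm2])
            omega
          omega
    -- π b = b
    have hbb : π b = b := by
      have hbm : π (b-1) = b-1 := by
        rcases Nat.eq_or_lt_of_le (show a + 1 ≤ b - 1 by omega) with h | h
        · rw [← h]; exact hap1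
        · exact hmid (b-1) (by omega) (by omega)
      have hbm2 : π (b-2) = b-2 := by
        rcases Nat.lt_or_ge (b-2) (a+1) with h' | h'
        · exact hup (b-2) (by omega)
        · rcases Nat.eq_or_lt_of_le h' with h'' | h''
          · rw [← h'']; exact hap1
          · exact hmid (b-2) (by omega) (by omega)
      have e : tadR n a b (π (b-1)) (π b) :=
        (hpres (b-1) b (by omega) (by omega)).mp (by unfold tadR; omega)
      rw [hbm] at e
      rw [hchar (b-1) (π b) (by omega) (hlt b (by omega))] at e
      have hne : π b ≠ b - 2 := by
        intro h'
        have := hinj b (b-2) (by omega) (by omega) (by rw [h', hbm2])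
        omega
      omega
    -- π (b+1) = b+1
    have hbp1 : π (b+1) = b+1 := by
      have e : tadR n a b (π b) (π (b+1)) :=
        (hpres b (b+1) (by omega) (by omega)).mp (by unfold tadR; omega)
      rw [hbb] at e
      rw [hchar b (π (b+1)) (by omega) (hlt (b+1) (by omega))] at e
      have hne1 : π (b+1) ≠ b - 1 := by
        intro h'
        have hbm : π (b-1) = b-1 := by
          rcases Nat.eq_or_lt_of_le (show a + 1 ≤ b - 1 by omega) with h | h
          · rw [← h]; exact hap1
          · exact hmid (b-1) (by omega) (by omega)
        have := hinj (b+1) (b-1) (by omega) (by omega) (by rw [h', hbm])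
        omega
      have hne2 : π (b+1) ≠ a := by
        intro h'
        have := hinj (b+1) a (by omega) (by omega) (by rw [h', hup a le_rfl])
        omega
      omega
    -- chain fix above b
    have htop : ∀ k, b + 1 ≤ k → k ≤ n - 1 → π k = k := by
      intro k
      induction k using Nat.strong_induction_on with
      | _ k ih =>
        intro hk1 hk2
        rcases Nat.eq_or_lt_of_le hk1 with h | h
        · rw [← h]; exact hbp1
        · have hkm : π (k-1) = k-1 := by
            rcases Nat.eq_or_lt_of_le (show b + 1 ≤ k - 1 by omega) with h' | h'
            · rw [← h']; exact hbp1
            · exact ih (k-1) (by omega) (by omega) (by omega)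
          have hkm2 : π (k-2) = k-2 := by
            rcases Nat.lt_or_ge (k-2) (b+1) with h' | h'
            · rcases Nat.lt_or_ge (k-2) b with h'' | h''
              · rcases Nat.lt_or_ge (k-2) (a+1) with h3 | h3
                · exact hup (k-2) (by omega)
                · rcases Nat.eq_or_lt_of_le h3 with h4 | h4
                  · rw [← h4]; exact hap1
                  · exact hmid (k-2) (by omega) (by omega)
              · have : k - 2 = b := by omega
                rw [this]; exact hbb
            · rcases Nat.eq_or_lt_of_le h' with h'' | h''
              · rw [← h'']; exact hbp1
              · exact ih (k-2) (by omega) (by omega) (by omega)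
          have e : tadR n a b (π (k-1)) (π k) :=
            (hpres (k-1) k (by omega) (by omega)).mp (by unfold tadR; omega)
          rw [hkm] at e
          rw [hchar (k-1) (π k) (by omega) (hlt k (by omega))] at e
          have hne : π k ≠ k - 2 := by
            intro h'
            have := hinj k (k-2) (by omega) (by omega) (by rw [h', hkm2])
            omega
          omega
    intro k hk
    rcases Nat.lt_or_ge k (a+1) with h | h
    · exact hup k (by omega)
    · rcases Nat.lt_or_ge k b with h' | h'
      · exact hmid k (by omega) (by omega)
      · rcases Nat.eq_or_lt_of_le h' with h'' | h''
        · rw [← h'']; exact hbb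
        · exact htop k (by omega) (by omega)
  · -- reversal branch : contradiction
    exfalso
    have h1 : π 1 = n - 2 := by
      have e := h01
      rw [h0] at e
      rw [hchar (n-1) (π 1) (by omega) (hlt 1 (by omega))] at e
      omega
    set m := min a (n - 1 - b) with hm
    have hm1 : 1 ≤ m := by omega
    have hrev : ∀ k, k ≤ m → π k = n - 1 - k := by
      intro k
      induction k using Nat.strong_induction_on with
      | _ k ih =>
        intro hkm
        match k, hkm with
        | 0, _ => simpa using h0
        | 1, _ => omega
        | (k+2), hkm =>
          have hk1 : π (k+1) = n - 1 - (k+1) := ih (k+1) (by omega) (by omega)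
          have hk0 : π k = n - 1 - k := ih k (by omega) (by omega)
          have e : tadR n a b (π (k+1)) (π (k+2)) :=
            (hpres (k+1) (k+2) (by omega) (by omega)).mp (by unfold tadR; omega)
          rw [hk1] at e
          -- n-1-(k+1) = n-2-k is interior and not a,b since k+1 < m ≤ min a (n-1-b)
          have hint : n - 2 - k ≠ a ∧ n - 2 - k ≠ b ∧ 1 ≤ n - 2 - k ∧ n - 2 - k ≤ n - 2 := by
            omega
          have : n - 1 - (k+1) = n - 2 - k := by omega
          rw [this] at e
          rw [hchar (n-2-k) (π (k+2)) (by omega) (hlt (k+2) (by omega))] at e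
          have hne : π (k+2) ≠ n - 1 - k := by
            intro h'
            have := hinj (k+2) k (by omega) (by omega) (by rw [h', hk0])
            omega
          omega
    have hmm : π m = n - 1 - m := hrev m le_rfl
    rcases Nat.lt_or_ge a (n - 1 - b) with hcase | hcase
    · -- m = a : degree-3 vertex a maps to interior n-1-a
      have hma : m = a := by omega
      rw [hma] at hmm
      exact hpig2 a (n - 1 - a) (by omega) hmm (Or.inl rfl) (by omega) (by omega)
        (by omega) (by omega)
    · -- m = n-1-b < a (since a ≠ n-1-b) : interior m maps to b
      have hma : m = n - 1 - b := by omega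
      have hlt' : n - 1 - b < a := by omega
      rw [hma] at hmm
      have : n - 1 - (n - 1 - b) = b := by omega
      rw [this] at hmm
      exact hpig (n-1-b) b (by omega) hmm (by omega) (by omega) (by omega) (by omega)
        (Or.inr rfl)

/-- Red edges {0,1},{1,2},{3,4} on the cycle. -/
def cycR (i j : ℕ) : Prop :=
  (i = 0 ∧ j = 1) ∨ (i = 1 ∧ j = 0) ∨ (i = 1 ∧ j = 2) ∨ (i = 2 ∧ j = 1) ∨
  (i = 3 ∧ j = 4) ∨ (i = 4 ∧ j = 3)

lemma famD (n : ℕ) (hn : 7 ≤ n) (π : ℕ → ℕ) (A : ℕ → ℕ → Prop)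
    (hlt : ∀ k, k < n → π k < n)
    (hinj : ∀ i j, i < n → j < n → π i = π j → i = j)
    (hAchar : ∀ i j, i < n → j < n →
      (A i j ↔ (i + 1 = j ∨ j + 1 = i ∨ (i = 0 ∧ j = n-1) ∨ (j = 0 ∧ i = n-1))))
    (hApres : ∀ i j, i < n → j < n → A i j → A (π i) (π j))
    (hpres : ∀ i j, i < n → j < n → (cycR i j ↔ cycR (π i) (π j))) :
    ∀ k, k < n → π k = k := by
  have hchar : ∀ s x : ℕ, cycR s x ↔ ((s = 0 ∧ x = 1) ∨ (s = 1 ∧ (x = 0 ∨ x = 2)) ∨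
      (s = 2 ∧ x = 1) ∨ (s = 3 ∧ x = 4) ∨ (s = 4 ∧ x = 3)) := by
    intro s x; unfold cycR; omega
  have e01 : cycR (π 0) (π 1) := (hpres 0 1 (by omega) (by omega)).mp (by unfold cycR; omega)
  have e12 : cycR (π 1) (π 2) := (hpres 1 2 (by omega) (by omega)).mp (by unfold cycR; omega)
  have e34 : cycR (π 3) (π 4) := (hpres 3 4 (by omega) (by omega)).mp (by unfold cycR; omega)
  have e01' : cycR (π 1) (π 0) := by unfold cycR at e01 ⊢; omega
  have c0 := (hchar (π 1) (π 0)).mp e01'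
  have c2 := (hchar (π 1) (π 2)).mp e12
  have ne02 : π 0 ≠ π 2 := fun h => by have := hinj 0 2 (by omega) (by omega) h; omega
  have hπ1 : π 1 = 1 := by omega
  have h02 : (π 0 = 0 ∧ π 2 = 2) ∨ (π 0 = 2 ∧ π 2 = 0) := by omega
  have c34 := (hchar (π 3) (π 4)).mp e34
  have ne31 : π 3 ≠ 1 := fun h => by have := hinj 3 1 (by omega) (by omega) (by omega); omega
  have ne41 : π 4 ≠ 1 := fun h => by have := hinj 4 1 (by omega) (by omega) (by omega); omega
  have h34 : (π 3 = 3 ∧ π 4 = 4) ∨ (π 3 = 4 ∧ π 4 = 3) := by omega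
  -- A 2 3 is a cycle edge
  have hA23 : A 2 3 := (hAchar 2 3 (by omega) (by omega)).mpr (by omega)
  have hA23' : A (π 2) (π 3) := hApres 2 3 (by omega) (by omega) hA23
  have hπ2 : π 2 = 2 := by
    rcases h02 with ⟨h0, h2⟩ | ⟨h0, h2⟩
    · exact h2
    · exfalso
      rw [h2] at hA23'
      have := (hAchar 0 (π 3) (by omega) (hlt 3 (by omega))).mp hA23'
      omega
  have hπ0 : π 0 = 0 := by omega
  have hπ3 : π 3 = 3 := by
    rw [hπ2] at hA23'
    have := (hAchar 2 (π 3) (by omega) (hlt 3 (by omega))).mp hA23'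
    omega
  have hπ4 : π 4 = 4 := by omega
  -- propagate
  have main : ∀ k, 4 ≤ k → k ≤ n - 1 → π k = k := by
    intro k
    induction k using Nat.strong_induction_on with
    | _ k ih =>
      intro hk1 hk2
      rcases Nat.eq_or_lt_of_le hk1 with h | h
      · rw [← h]; exact hπ4
      · have hkm : π (k-1) = k-1 := by
          rcases Nat.eq_or_lt_of_le (show 4 ≤ k - 1 by omega) with h' | h'
          · rw [← h']; exact hπ4
          · exact ih (k-1) (by omega) (by omega) (by omega)
        have hkm2 : π (k-2) = k-2 := by
          rcases Nat.lt_or_ge (k-2) 5 with h' | h'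
          · interval_cases h'' : (k-2) <;> simp_all
          · exact ih (k-2) (by omega) (by omega) (by omega)
        have hA : A (k-1) k := (hAchar (k-1) k (by omega) (by omega)).mpr (by omega)
        have hA' : A (π (k-1)) (π k) := hApres (k-1) k (by omega) (by omega) hA
        rw [hkm] at hA'
        have := (hAchar (k-1) (π k) (by omega) (hlt k (by omega))).mp hA'
        have hne : π k ≠ k - 2 := by
          intro h'
          have := hinj k (k-2) (by omega) (by omega) (by rw [h', hkm2])
          omega
        omega
  intro k hk
  rcases Nat.lt_or_ge k 5 with h | h
  · interval_cases k <;> assumption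
  · exact main k (by omega) (by omega)

variable {V : Type*} [Fintype V] [DecidableEq V]

/-- injective listing of size card V is surjective -/
lemma listing_surj (G : SimpleGraph V) (n : ℕ) (hn : n = Fintype.card V) (w : ℕ → V)
    (hwinj : ∀ i j, i < n → j < n → w i = w j → i = j) :
    ∀ x : V, ∃ k, k < n ∧ w k = x := by
  intro x
  have := Finset.surj_on_of_inj_on_of_card_le (s := Finset.range n) (t := Finset.univ)
    (f := fun a _ => w a) (fun a _ => Finset.mem_univ _)
    (fun a₁ a₂ ha₁ ha₂ h => by
      simp only [Finset.mem_range] at ha₁ ha₂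
      exact hwinj _ _ ha₁ ha₂ h)
    (by simp [hn]) x (Finset.mem_univ x)
  obtain ⟨a, ha, hae⟩ := this
  simp only [Finset.mem_range] at ha
  exact ⟨a, ha, hae.symm⟩

lemma surj_aux' (n : ℕ) (π : ℕ → ℕ) (hlt : ∀ k, k < n → π k < n)
    (hinj : ∀ i j, i < n → j < n → π i = π j → i = j) :
    ∀ m, m < n → ∃ k, k < n ∧ π k = m := by
  intro m hm
  have := Finset.surj_on_of_inj_on_of_card_le (s := Finset.range n) (t := Finset.range n)
    (f := fun a _ => π a)
    (fun a ha => by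
      simp only [Finset.mem_range] at ha ⊢
      exact hlt a ha)
    (fun a₁ a₂ ha₁ ha₂ h => by
      simp only [Finset.mem_range] at ha₁ ha₂; exact hinj _ _ ha₁ ha₂ h)
    le_rfl m (by simpa using hm)
  obtain ⟨a, ha, hae⟩ := this
  simp only [Finset.mem_range] at ha
  exact ⟨a, ha, hae.symm⟩

/-- The bridge: a 2-coloring indicator of an index relation has trivial stabilizer
provided every index permutation preserving the relation (and adjacency) is the identity. -/
lemma exists_good_f (G : SimpleGraph V) (n : ℕ) (hn : n = Fintype.card V)
    (w : ℕ → V)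
    (hwinj : ∀ i j, i < n → j < n → w i = w j → i = j)
    (Rn : ℕ → ℕ → Prop)
    (hsym : ∀ i j, Rn i j → Rn j i)
    (hedge : ∀ i j, i < n → j < n → Rn i j → G.Adj (w i) (w j))
    (hkill : ∀ π : ℕ → ℕ, (∀ k, k < n → π k < n) →
      (∀ i j, i < n → j < n → π i = π j → i = j) →
      (∀ m, m < n → ∃ k, k < n ∧ π k = m) →
      (∀ i j, i < n → j < n → (Rn i j ↔ Rn (π i) (π j))) →
      (∀ i j, i < n → j < n → G.Adj (w i) (w j) → G.Adj (w (π i)) (w (π j))) →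
      ∀ k, k < n → π k = k) :
    ∃ f : Sym2 V → Fin 2,
      ∀ φ : G ≃g G, (∀ e ∈ G.edgeSet, f (Sym2.map ⇑φ e) = f e) → ∀ v, φ v = v := by
  classical
  have hsurjV := listing_surj G n hn w hwinj
  refine ⟨fun p => if ∃ i j, i < n ∧ j < n ∧ Rn i j ∧ p = s(w i, w j) then 1 else 0, ?_⟩
  intro φ hφ v
  -- index permutation
  have hπ : ∀ k : ℕ, ∃ m, m < n ∧ w m = φ (w k) := fun k => hsurjV (φ (w k))
  set π : ℕ → ℕ := fun k => (hπ k).choose with hπdef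
  have hπw : ∀ k, w (π k) = φ (w k) := fun k => (hπ k).choose_spec.2
  have hπlt : ∀ k, k < n → π k < n := fun k _ => (hπ k).choose_spec.1
  have hπinj : ∀ i j, i < n → j < n → π i = π j → i = j := by
    intro i j hi hj h
    apply hwinj i j hi hj
    have h1 := hπw i
    have h2 := hπw j
    apply φ.injective
    rw [← h1, ← h2, h]
  have hπsurj := surj_aux' n π hπlt hπinj
  -- decode: the coloring detects the relation
  have hdecode : ∀ x y : ℕ, x < n → y < n →
      ((∃ i j, i < n ∧ j < n ∧ Rn i j ∧ (s(w x, w y) : Sym2 V) = s(w i, w j)) ↔ Rn x y) := by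
    intro x y hx hy
    constructor
    · rintro ⟨i, j, hi, hj, hR, heq⟩
      rw [Sym2.eq_iff] at heq
      rcases heq with ⟨h1, h2⟩ | ⟨h1, h2⟩
      · rw [hwinj x i hx hi h1, hwinj y j hy hj h2]; exact hR
      · rw [hwinj x j hx hj h1, hwinj y i hy hi h2]; exact hsym _ _ hR
    · intro h; exact ⟨x, y, hx, hy, h, rfl⟩
  -- forward preservation
  have hfwd : ∀ i j, i < n → j < n → Rn i j → Rn (π i) (π j) := by
    intro i j hi hj hR
    have hadj : G.Adj (w i) (w j) := hedge i j hi hj hR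
    have he : (s(w i, w j) : Sym2 V) ∈ G.edgeSet := by rwa [mem_edgeSet]
    have hthis := hφ _ he
    simp only [Sym2.map_pair_eq] at hthis
    by_cases hq : ∃ i' j', i' < n ∧ j' < n ∧ Rn i' j' ∧
        (s(φ (w i), φ (w j)) : Sym2 V) = s(w i', w j')
    · rw [← hπw i, ← hπw j] at hq
      exact (hdecode (π i) (π j) (hπlt i hi) (hπlt j hj)).mp hq
    · exfalso
      rw [if_neg hq, if_pos (⟨i, j, hi, hj, hR, rfl⟩ :
        ∃ i' j', i' < n ∧ j' < n ∧ Rn i' j' ∧ (s(w i, w j) : Sym2 V) = s(w i', w j'))] at hthis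
      exact absurd hthis.symm (by decide)
  -- two-sided preservation by counting
  have hpres : ∀ i j, i < n → j < n → (Rn i j ↔ Rn (π i) (π j)) := by
    intro i j hi hj
    constructor
    · exact hfwd i j hi hj
    · intro hR
      have hS := Finset.surj_on_of_inj_on_of_card_le
        (s := (Finset.range n ×ˢ Finset.range n).filter (fun q => Rn q.1 q.2))
        (t := (Finset.range n ×ˢ Finset.range n).filter (fun q => Rn q.1 q.2))
        (f := fun q _ => (π q.1, π q.2))
        (fun q hq => by
          simp only [Finset.mem_filter, Finset.mem_product, Finset.mem_range] at hq ⊢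
          exact ⟨⟨hπlt _ hq.1.1, hπlt _ hq.1.2⟩, hfwd _ _ hq.1.1 hq.1.2 hq.2⟩)
        (fun q₁ q₂ hq₁ hq₂ h => by
          simp only [Finset.mem_filter, Finset.mem_product, Finset.mem_range] at hq₁ hq₂
          have h1 : π q₁.1 = π q₂.1 := congrArg Prod.fst h
          have h2 : π q₁.2 = π q₂.2 := congrArg Prod.snd h
          exact Prod.ext (hπinj _ _ hq₁.1.1 hq₂.1.1 h1) (hπinj _ _ hq₁.1.2 hq₂.1.2 h2))
        le_rfl (π i, π j)
        (by simp only [Finset.mem_filter, Finset.mem_product, Finset.mem_range]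
            exact ⟨⟨hπlt _ hi, hπlt _ hj⟩, hR⟩)
      obtain ⟨q, hq, hqe⟩ := hS
      simp only [Finset.mem_filter, Finset.mem_product, Finset.mem_range] at hq
      have h1 : π i = π q.1 := congrArg Prod.fst hqe
      have h2 : π j = π q.2 := congrArg Prod.snd hqe
      rw [hπinj _ _ hi hq.1.1 h1, hπinj _ _ hj hq.1.2 h2]
      exact hq.2
  -- adjacency transfer
  have hAt : ∀ i j, i < n → j < n → G.Adj (w i) (w j) → G.Adj (w (π i)) (w (π j)) := by
    intro i j _ _ hadj
    rw [hπw i, hπw j]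
    exact φ.map_adj_iff.mpr hadj
  have hid := hkill π hπlt hπinj hπsurj hpres hAt
  obtain ⟨k, hk, hkw⟩ := hsurjV v
  rw [← hkw, ← hπw k, hid k hk]



theorem main {V : Type*} [Fintype V] [DecidableEq V]
    (G : SimpleGraph V) (hcard : 7 ≤ Fintype.card V)
    (hham : ∃ (u v : V) (p : G.Walk u v), p.IsPath ∧ p.IsHamiltonian) :
    ∃ f : Sym2 V → Fin 2,
      ∀ φ : G ≃g G, (∀ e ∈ G.edgeSet, f (Sym2.map ⇑φ e) = f e) → ∀ v, φ v = v := by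
  classical
  obtain ⟨u0, v0, p, hp, hHam⟩ := hham
  set n := Fintype.card V with hn
  have hn7 : 7 ≤ n := hcard
  have hlen : p.support.length = n := by
    have h1 := hHam.length_eq
    have h2 := p.length_support
    omega
  set w : ℕ → V := fun k => p.support.getD k u0 with hwdef
  have hwinj : ∀ i j, i < n → j < n → w i = w j → i = j := by
    intro i j hi hj hij
    have hnd : p.support.Nodup := hp.support_nodup
    rw [hwdef] at hij
    simp only [List.getD_eq_getElem _ _ (show i < p.support.length by omega),
      List.getD_eq_getElem _ _ (show j < p.support.length by omega)] at hij
    have := List.nodup_iff_injective_get.mp hnd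
      (a₁ := ⟨i, by omega⟩) (a₂ := ⟨j, by omega⟩)
    simp only [List.get_eq_getElem] at this
    have h := this hij
    exact congrArg Fin.val h
  have hadj : ∀ k, k + 1 < n → G.Adj (w k) (w (k+1)) := by
    have hch := p.isChain_adj_support
    rw [List.isChain_iff_getElem] at hch
    intro k hk
    have := hch k (by omega)
    rw [hwdef]
    simpa only [List.getD_eq_getElem _ _ (show k < p.support.length by omega),
      List.getD_eq_getElem _ _ (show k + 1 < p.support.length by omega)] using this
  by_cases hH : G.Adj (w 0) (w (n-1))
  · -- Hamiltonian cycle present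
    by_cases hch : ∃ x y, x < n ∧ y < n ∧ G.Adj (w x) (w y) ∧ x + 1 ≠ y ∧ y + 1 ≠ x ∧
        ¬(x = 0 ∧ y = n-1) ∧ ¬(y = 0 ∧ x = n-1)
    · -- chord exists: rotate and use tadpole
      have key : ∀ x y, x < n → y < n → x + 2 ≤ y → ¬(x = 0 ∧ y = n-1) →
          G.Adj (w x) (w y) →
          ∃ f : Sym2 V → Fin 2,
            ∀ φ : G ≃g G, (∀ e ∈ G.edgeSet, f (Sym2.map ⇑φ e) = f e) → ∀ v, φ v = v := by
        intro x y hx hy hxy hno hAdj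
        set d := y - x with hd
        have hd2 : 2 ≤ d := by omega
        have hdn : d ≤ n - 2 := by omega
        set s := if d ≤ 3 then (x + (n - 1)) % n else (x + 2) % n with hs
        set a' := if d ≤ 3 then 1 else d - 2 with ha'
        set b' := if d ≤ 3 then d + 1 else n - 2 with hb'
        set w' : ℕ → V := fun t => w ((s + t) % n) with hw'
        have hnpos : 0 < n := by omega
        have hwinj' : ∀ i j, i < n → j < n → w' i = w' j → i = j := by
          intro i j hi hj hij
          have := hwinj ((s+i) % n) ((s+j) % n) (Nat.mod_lt _ hnpos) (Nat.mod_lt _ hnpos) hij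
          exact addmod_inj n s i j hi hj this
        have hadjcyc : ∀ u, u < n → G.Adj (w u) (w ((u+1) % n)) := by
          intro u hu
          rcases Nat.lt_or_ge (u+1) n with h | h
          · rw [Nat.mod_eq_of_lt h]; exact hadj u h
          · have hu' : u = n - 1 := by omega
            have : (u + 1) % n = 0 := by
              rw [hu']
              have : n - 1 + 1 = n := by omega
              rw [this, Nat.mod_self]
            rw [this, hu']
            exact hH.symm
        have hadj' : ∀ t, t + 1 < n → G.Adj (w' t) (w' (t+1)) := by
          intro t ht
          have he : w' (t+1) = w (((s+t) % n + 1) % n) := by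
            show w ((s + (t+1)) % n) = w (((s+t) % n + 1) % n)
            congr 1
            rw [Nat.mod_add_mod, show s + t + 1 = s + (t+1) by ring]
          rw [he]
          exact hadjcyc ((s+t) % n) (Nat.mod_lt _ hnpos)
        -- chord positions
        have hpos : (w' a' = w x ∧ w' b' = w y) ∨ (w' a' = w y ∧ w' b' = w x) := by
          rcases le_or_gt d 3 with hc | hc
          · have ha'' : a' = 1 := by rw [ha']; simp [hc]
            have hb'' : b' = d + 1 := by rw [hb']; simp [hc]
            have hs'' : s = (x + (n-1)) % n := by rw [hs]; simp [hc]
            left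
            constructor
            · show w ((s + a') % n) = w x
              congr 1
              rw [ha'', hs'', Nat.mod_add_mod, show x + (n-1) + 1 = x + n by omega,
                Nat.add_mod_right, Nat.mod_eq_of_lt hx]
            · show w ((s + b') % n) = w y
              congr 1
              rw [hb'', hs'', Nat.mod_add_mod, show x + (n-1) + (d+1) = (x + d) + n by omega,
                Nat.add_mod_right, Nat.mod_eq_of_lt (show x + d < n by omega),
                show x + d = y by omega]
          · have ha'' : a' = d - 2 := by rw [ha']; simp [show ¬ d ≤ 3 by omega]
            have hb'' : b' = n - 2 := by rw [hb']; simp [show ¬ d ≤ 3 by omega]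
            have hs'' : s = (x + 2) % n := by rw [hs]; simp [show ¬ d ≤ 3 by omega]
            right
            constructor
            · show w ((s + a') % n) = w y
              congr 1
              rw [ha'', hs'', Nat.mod_add_mod, show x + 2 + (d - 2) = x + d by omega,
                Nat.mod_eq_of_lt (show x + d < n by omega), show x + d = y by omega]
            · show w ((s + b') % n) = w x
              congr 1
              rw [hb'', hs'', Nat.mod_add_mod, show x + 2 + (n - 2) = x + n by omega,
                Nat.add_mod_right, Nat.mod_eq_of_lt hx]
        have hchordAdj : G.Adj (w' a') (w' b') := by
          rcases hpos with ⟨h1, h2⟩ | ⟨h1, h2⟩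
          · rw [h1, h2]; exact hAdj
          · rw [h1, h2]; exact hAdj.symm
        have hcond : 1 ≤ a' ∧ a' + 2 ≤ b' ∧ b' ≤ n - 2 ∧ a' ≠ n - 1 - b' := by
          rcases le_or_gt d 3 with hc | hc
          · have ha'' : a' = 1 := by rw [ha']; simp [hc]
            have hb'' : b' = d + 1 := by rw [hb']; simp [hc]
            omega
          · have ha'' : a' = d - 2 := by rw [ha']; simp [show ¬ d ≤ 3 by omega]
            have hb'' : b' = n - 2 := by rw [hb']; simp [show ¬ d ≤ 3 by omega]
            omega
        apply exists_good_f G n hn w' hwinj' (tadR n a' b')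
        · intro i j h; unfold tadR at h ⊢; omega
        · intro i j hi hj hR
          unfold tadR at hR
          rcases hR with ⟨h1, h2⟩ | ⟨h1, h2⟩ | ⟨h1, h2⟩ | ⟨h1, h2⟩
          · rw [← h1]; exact hadj' i (by omega)
          · rw [← h1]; exact (hadj' j (by omega)).symm
          · rw [h1, h2]; exact hchordAdj
          · rw [h1, h2]; exact hchordAdj.symm
        · intro π hlt hinj hsurj hpres _
          exact famC n a' b' hn7 hcond.1 hcond.2.1 hcond.2.2.1 hcond.2.2.2 π hlt hinj hsurj hpres
      obtain ⟨x, y, hx, hy, hAdj, h1, h2, h3, h4⟩ := hch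
      rcases Nat.lt_or_ge x y with hlt | hge
      · exact key x y hx hy (by omega) h3 hAdj
      · have hne : x ≠ y := fun h => hAdj.ne (congrArg w h)
        exact key y x hy hx (by omega) h4 hAdj.symm
    · -- no chord : G = C_n exactly
      push_neg at hch
      apply exists_good_f G n hn w hwinj cycR
      · intro i j h; unfold cycR at h ⊢; omega
      · intro i j hi hj hR
        unfold cycR at hR
        rcases hR with ⟨h1,h2⟩|⟨h1,h2⟩|⟨h1,h2⟩|⟨h1,h2⟩|⟨h1,h2⟩|⟨h1,h2⟩ <;> subst h1 <;> subst h2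
        · exact hadj 0 (by omega)
        · exact (hadj 0 (by omega)).symm
        · exact hadj 1 (by omega)
        · exact (hadj 1 (by omega)).symm
        · exact hadj 3 (by omega)
        · exact (hadj 3 (by omega)).symm
      · intro π hlt hinj hsurj hpres hAt
        apply famD n hn7 π (fun i j => G.Adj (w i) (w j)) hlt hinj ?_ hAt hpres
        intro i j hi hj
        constructor
        · intro hA
          by_contra hc
          push_neg at hc
          have := hch i j hi hj hA
          omega
        · intro hc
          rcases hc with h | h | ⟨h1, h2⟩ | ⟨h1, h2⟩
          · rw [← h]; exact hadj i (by omega)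
          · rw [← h]; exact (hadj j (by omega)).symm
          · rw [h1, h2]; exact hH
          · rw [h1, h2]; exact hH.symm
  · -- no Hamiltonian cycle: chain minus first edge
    apply exists_good_f G n hn w hwinj (chainR n)
    · intro i j h; unfold chainR at h ⊢; omega
    · intro i j hi hj hR
      unfold chainR at hR
      rcases hR with ⟨h1, h2, h3⟩ | ⟨h1, h2, h3⟩
      · rw [← h1]; exact hadj i (by omega)
      · rw [← h1]; exact (hadj j (by omega)).symm
    · intro π hlt hinj hsurj hpres hAt
      rcases famB n hn7 π hlt hinj hpres with hid | ⟨h0, hrev⟩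
      · exact hid
      · exfalso
        have h1 : π 1 = n - 1 := hrev 1 le_rfl (by omega)
        have := hAt 0 1 (by omega) (by omega) (hadj 0 (by omega))
        rw [h0, h1] at this
        exact hH this

end HamDistAux

theorem distinguishingIndex_le_two_of_hamiltonianPath {V : Type*} [Fintype V] [DecidableEq V]
    (G : SimpleGraph V) (hconn : G.Connected) (hcard : 7 ≤ Fintype.card V)
    (hham : ∃ (u v : V) (p : G.Walk u v), p.IsPath ∧ p.IsHamiltonian) :
    distinguishingIndex G ≤ 2 := by
  exact Nat.sInf_le (HamDistAux.main G hcard hham)
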